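/- arXiv:2402.19322 — 2 statements merged into one kernel-verified Lean document; each statement's English description precedes it below -/
import Mathlib

section
/- Fix a fully-connected ReLU network with L hidden layers given by weight matrices W_m and bias vectors b_m, an input x ∈ ℝ^{k_0}, and concrete bounds l_{m,k} ≤ ẑ_{m,k}(x) ≤ u_{m,k} for every hidden neuron, where ẑ_{m,k}(x) denotes the exact pre-activation value of neuron k in layer m on input x. Then an assignment of values (ẑ_{m,k}, z_{m,k}) with z_{0} = x satisfies the affine constraints ẑ_{m,k} = b_{m,k} + Σ_{k'} w_{m,k,k'}·z_{m−1,k'} together with, for some boolean values a_{m,k} ∈ {0, 1}, the big-M constraints z_{m,k} ≥ 0, z_{m,k} ≥ ẑ_{m,k}, z_{m,k} ≤ u_{m,k}·a_{m,k}, z_{m,k} ≤ ẑ_{m,k} − l_{m,k}·(1 − a_{m,k}) for all m, k, if and only if for all m, k: ẑ_{m,k} = ẑ_{m,k}(x) and z_{m,k} = ReLU(ẑ_{m,k}(x)). (The big-M MIP constraints exactly characterize the network's forward computation.) -/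
/-- Post-activation values of a fully-connected ReLU network:
`netPost k w b x m` is the vector of post-activation values of layer `m` on input `x`. -/
noncomputable def netPost (k : ℕ → ℕ)
    (w : ∀ m, Fin (k (m + 1)) → Fin (k m) → ℝ)
    (b : ∀ m, Fin (k (m + 1)) → ℝ)
    (x : Fin (k 0) → ℝ) : (m : ℕ) → Fin (k m) → ℝ
  | 0 => x
  | m + 1 => fun j => max (b m j + ∑ i, w m j i * netPost k w b x m i) 0

/-- Exact pre-activation value `ẑ_{m+1,j}(x)` of neuron `j` in layer `m+1` on input `x`. -/
noncomputable def netPre (k : ℕ → ℕ)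
    (w : ∀ m, Fin (k (m + 1)) → Fin (k m) → ℝ)
    (b : ∀ m, Fin (k (m + 1)) → ℝ)
    (x : Fin (k 0) → ℝ) (m : ℕ) (j : Fin (k (m + 1))) : ℝ :=
  b m j + ∑ i, w m j i * netPost k w b x m i

/-- The big-M MIP constraints exactly characterize the network's forward computation:
given valid concrete bounds at `x`, an assignment `(ẑ, z)` with `z 0 = x` satisfies the
affine constraints together with (for some boolean values `a`) the big-M constraints at
every hidden neuron, if and only if `ẑ` and `z` coincide with the exact pre-activation
values and their ReLUs. -/
theorem bigM_network_characterization
    (L : ℕ) (k : ℕ → ℕ)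
    (w : ∀ m, Fin (k (m + 1)) → Fin (k m) → ℝ)
    (b : ∀ m, Fin (k (m + 1)) → ℝ)
    (x : Fin (k 0) → ℝ)
    (l u : ∀ m, Fin (k (m + 1)) → ℝ)
    (hbounds : ∀ m, m < L → ∀ j, l m j ≤ netPre k w b x m j ∧ netPre k w b x m j ≤ u m j)
    (zhat : ∀ m, Fin (k (m + 1)) → ℝ)
    (z : ∀ m, Fin (k m) → ℝ)
    (hz0 : z 0 = x) :
    ((∀ m, m < L → ∀ j, zhat m j = b m j + ∑ i, w m j i * z m i) ∧
      ∃ a : ∀ m, Fin (k (m + 1)) → ℝ,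
        ∀ m, m < L → ∀ j,
          (a m j = 0 ∨ a m j = 1) ∧
          z (m + 1) j ≥ 0 ∧
          z (m + 1) j ≥ zhat m j ∧
          z (m + 1) j ≤ u m j * a m j ∧
          z (m + 1) j ≤ zhat m j - l m j * (1 - a m j)) ↔
    (∀ m, m < L → ∀ j,
      zhat m j = netPre k w b x m j ∧ z (m + 1) j = max (netPre k w b x m j) 0) := by
  constructor
  · rintro ⟨haff, a, ha⟩
    have key : ∀ m, m ≤ L → ∀ i, z m i = netPost k w b x m i := by
      intro m
      induction m with
      | zero => intro _ i; rw [hz0]; rfl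
      | succ m ih =>
        intro hm j
        have hmL : m < L := Nat.lt_of_succ_le hm
        have hz : zhat m j = netPre k w b x m j := by
          rw [haff m hmL j, netPre]
          congr 1
          exact Finset.sum_congr rfl fun i _ => by rw [ih hmL.le i]
        obtain ⟨ha01, h0, hzh, hu, hl⟩ := ha m hmL j
        show z (m+1) j = max (b m j + ∑ i, w m j i * netPost k w b x m i) 0
        rw [← netPre, ← hz]
        rcases ha01 with hA | hA
        · have hz0' : z (m+1) j = 0 := le_antisymm (by simpa [hA] using hu) h0
          have hneg : zhat m j ≤ 0 := hz0' ▸ hzh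
          rw [hz0', max_eq_right hneg]
        · have hzz : z (m+1) j = zhat m j := le_antisymm (by simpa [hA] using hl) hzh
          rw [hzz, max_eq_left (hzz ▸ h0)]
    intro m hmL j
    have hz : zhat m j = netPre k w b x m j := by
      rw [haff m hmL j, netPre]
      congr 1
      exact Finset.sum_congr rfl fun i _ => by rw [key m hmL.le i]
    exact ⟨hz, by rw [key (m+1) hmL j]; rfl⟩
  · intro h
    have key : ∀ m, m ≤ L → ∀ i, z m i = netPost k w b x m i := by
      intro m
      cases m with
      | zero => intro _ i; rw [hz0]; rfl
      | succ m => intro hm j; rw [(h m (Nat.lt_of_succ_le hm) j).2]; rfl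
    constructor
    · intro m hmL j
      rw [(h m hmL j).1, netPre]
      congr 1
      exact Finset.sum_congr rfl fun i _ => by rw [key m hmL.le i]
    · refine ⟨fun m j => if 0 ≤ netPre k w b x m j then 1 else 0, ?_⟩
      intro m hmL j
      obtain ⟨hz1, hz2⟩ := h m hmL j
      obtain ⟨hl, hu⟩ := hbounds m hmL j
      by_cases hc : 0 ≤ netPre k w b x m j
      · simp only [if_pos hc]
        rw [hz2, hz1, max_eq_left hc]
        refine ⟨Or.inr trivial, hc, le_refl _, by linarith, by linarith⟩
      · simp only [if_neg hc]
        push_neg at hc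
        rw [hz2, hz1, max_eq_right hc.le]
        refine ⟨Or.inl trivial, le_refl _, hc.le, by linarith, by linarith⟩
end

section
/- Fix a fully-connected ReLU classifier D over classes C with input domain [0,1]^{k_0}, a class c' ∈ C, a target class c_t ≠ c', a perturbation function f_P : ℝ^{k_0} × ℝ^e → ℝ^{k_0}, and a perturbation range I ⊆ ℝ^e. Suppose the concrete bounds l_{m,k}, u_{m,k} are valid for ẑ_{m,k}(x) for every x ∈ [0,1]^{k_0}, and the concrete bounds l^p_{m,k}, u^p_{m,k} are valid for ẑ_{m,k}(f_P(x,ε)) for every x ∈ [0,1]^{k_0} and ε ∈ I. Consider the MIP feasible set of tuples (x, ε, δ, ẑ, z, a, ẑ^p, z^p, a^p) satisfying: x ∈ [0,1]^{k_0}, ε ∈ I, z_0 = x, z^p_0 = f_P(x, ε), the affine constraints and big-M constraints (with bounds l, u for the z-copy and l^p, u^p for the z^p-copy) at every hidden neuron of both copies, the constraints z_{L,c'} − z_{L,c''} > δ for every c'' ≠ c', and z^p_{L,c_t} − z^p_{L,c''} > 0 for every c'' ≠ c_t. Then the supremum of δ over this MIP feasible set equals the maximal globally non-robust bound targeting c_t,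 namely sup { δ ∈ ℝ : ∃ x ∈ [0,1]^{k_0}, ∃ ε ∈ I, C(x, c', D) > δ and C(f_P(x, ε), c_t, D) > 0 }. (Lemma 1, first part: an optimal solution to the MIP is the maximal globally non-robust bound targeting c_t.) -/
/-- Class confidence: `conf scores c' = min_{c'' ≠ c'} (scores c' - scores c'')`. -/
noncomputable def conf {n : ℕ} (scores : Fin n → ℝ) (c' : Fin n) : ℝ :=
  sInf {d : ℝ | ∃ c'', c'' ≠ c' ∧ d = scores c' - scores c''}


lemma bigM_eq {zh z a l u : ℝ}
    (ha : a = 0 ∨ a = 1) (h0 : z ≥ 0) (h1 : z ≥ zh) (h2 : z ≤ u * a)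
    (h3 : z ≤ zh - l * (1 - a)) : z = max zh 0 := by
  rcases ha with ha | ha <;> subst ha
  · simp only [mul_zero] at h2
    have hz : z = 0 := le_antisymm h2 h0
    subst hz
    exact (max_eq_right h1).symm
  · simp only [mul_one, sub_self, mul_zero, sub_zero] at h3
    have hz : z = zh := le_antisymm h3 h1
    subst hz
    exact (max_eq_left h0).symm

lemma z_eq_netPost (L : ℕ) (k : ℕ → ℕ)
    (w : ∀ m, Fin (k (m + 1)) → Fin (k m) → ℝ)
    (b : ∀ m, Fin (k (m + 1)) → ℝ)
    (x : Fin (k 0) → ℝ)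
    (zhat : ∀ m, Fin (k (m + 1)) → ℝ) (z : ∀ m, Fin (k m) → ℝ)
    (hz0 : z 0 = x)
    (haff : ∀ m, m < L → ∀ j, zhat m j = b m j + ∑ i, w m j i * z m i)
    (hrelu : ∀ m, m < L → ∀ j, z (m + 1) j = max (zhat m j) 0) :
    ∀ m, m ≤ L → z m = netPost k w b x m := by
  intro m
  induction m with
  | zero => intro _; exact hz0
  | succ n ih =>
    intro hle
    have hn : n < L := lt_of_lt_of_le (Nat.lt_succ_self n) hle
    have ihn := ih (le_of_lt hn)
    funext j
    rw [hrelu n hn j, haff n hn j, ihn]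
    rfl

lemma conf_gt_iff {n : ℕ} (scores : Fin n → ℝ) (c' c0 : Fin n) (hc0 : c0 ≠ c') (δ : ℝ) :
    conf scores c' > δ ↔ ∀ c'', c'' ≠ c' → scores c' - scores c'' > δ := by
  have hS : {d : ℝ | ∃ c'', c'' ≠ c' ∧ d = scores c' - scores c''}
      = (fun c'' => scores c' - scores c'') '' {c'' | c'' ≠ c'} := by
    ext d; constructor
    · rintro ⟨c'', h1, h2⟩; exact ⟨c'', h1, h2.symm⟩
    · rintro ⟨c'', h1, h2⟩; exact ⟨c'', h1, h2.symm⟩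
  have hfin : {d : ℝ | ∃ c'', c'' ≠ c' ∧ d = scores c' - scores c''}.Finite := by
    rw [hS]; exact (Set.finite_univ.subset (Set.subset_univ _)).image _
  have hne : {d : ℝ | ∃ c'', c'' ≠ c' ∧ d = scores c' - scores c''}.Nonempty :=
    ⟨scores c' - scores c0, c0, hc0, rfl⟩
  constructor
  · intro h c'' hc''
    have hle : conf scores c' ≤ scores c' - scores c'' :=
      csInf_le hfin.bddBelow ⟨c'', hc'', rfl⟩
    linarith
  · intro h
    obtain ⟨c'', hc'', heq⟩ := hne.csInf_mem hfin
    rw [conf, heq]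
    exact h c'' hc''

lemma bigM_construct {zh l u : ℝ} (hl : l ≤ zh) (hu : zh ≤ u) :
    ((if (0:ℝ) ≤ zh then (1:ℝ) else 0) = 0 ∨ (if (0:ℝ) ≤ zh then (1:ℝ) else 0) = 1) ∧
    max zh 0 ≥ 0 ∧ max zh 0 ≥ zh ∧
    max zh 0 ≤ u * (if (0:ℝ) ≤ zh then (1:ℝ) else 0) ∧
    max zh 0 ≤ zh - l * (1 - (if (0:ℝ) ≤ zh then (1:ℝ) else 0)) := by
  by_cases h : (0:ℝ) ≤ zh
  · rw [if_pos h, max_eq_left h]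
    refine ⟨Or.inr rfl, h, le_refl _, by rw [mul_one]; exact hu, by simp⟩
  · push_neg at h
    rw [if_neg (not_le.2 h), max_eq_right h.le]
    refine ⟨Or.inl rfl, le_refl _, h.le, by simp, by simp; linarith⟩

/-- Lemma 1, first part: the optimal value of the MIP equals the maximal globally
non-robust bound targeting `ct`. -/
theorem mip_optimum_eq_max_globally_nonrobust_bound
    (L : ℕ) (k : ℕ → ℕ) (e : ℕ)
    (w : ∀ m, Fin (k (m + 1)) → Fin (k m) → ℝ)
    (b : ∀ m, Fin (k (m + 1)) → ℝ)
    (c' ct : Fin (k L)) (hct : ct ≠ c')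
    (fP : (Fin (k 0) → ℝ) → (Fin e → ℝ) → (Fin (k 0) → ℝ))
    (I : Set (Fin e → ℝ))
    (l u lp up : ∀ m, Fin (k (m + 1)) → ℝ)
    (hbounds : ∀ x : Fin (k 0) → ℝ, (∀ i, x i ∈ Set.Icc (0 : ℝ) 1) →
      ∀ m, m < L → ∀ j, l m j ≤ netPre k w b x m j ∧ netPre k w b x m j ≤ u m j)
    (hboundsP : ∀ x : Fin (k 0) → ℝ, (∀ i, x i ∈ Set.Icc (0 : ℝ) 1) → ∀ ε ∈ I,
      ∀ m, m < L → ∀ j,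
        lp m j ≤ netPre k w b (fP x ε) m j ∧ netPre k w b (fP x ε) m j ≤ up m j) :
    sSup { δ : ℝ | ∃ (x : Fin (k 0) → ℝ) (ε : Fin e → ℝ)
          (zhat : ∀ m, Fin (k (m + 1)) → ℝ) (z : ∀ m, Fin (k m) → ℝ)
          (a : ∀ m, Fin (k (m + 1)) → ℝ)
          (zhatp : ∀ m, Fin (k (m + 1)) → ℝ) (zp : ∀ m, Fin (k m) → ℝ)
          (ap : ∀ m, Fin (k (m + 1)) → ℝ),
        (∀ i, x i ∈ Set.Icc (0 : ℝ) 1) ∧ ε ∈ I ∧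
        z 0 = x ∧ zp 0 = fP x ε ∧
        (∀ m, m < L → ∀ j, zhat m j = b m j + ∑ i, w m j i * z m i) ∧
        (∀ m, m < L → ∀ j, zhatp m j = b m j + ∑ i, w m j i * zp m i) ∧
        (∀ m, m < L → ∀ j,
          (a m j = 0 ∨ a m j = 1) ∧
          z (m + 1) j ≥ 0 ∧ z (m + 1) j ≥ zhat m j ∧
          z (m + 1) j ≤ u m j * a m j ∧
          z (m + 1) j ≤ zhat m j - l m j * (1 - a m j)) ∧
        (∀ m, m < L → ∀ j,
          (ap m j = 0 ∨ ap m j = 1) ∧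
          zp (m + 1) j ≥ 0 ∧ zp (m + 1) j ≥ zhatp m j ∧
          zp (m + 1) j ≤ up m j * ap m j ∧
          zp (m + 1) j ≤ zhatp m j - lp m j * (1 - ap m j)) ∧
        (∀ c'', c'' ≠ c' → z L c' - z L c'' > δ) ∧
        (∀ c'', c'' ≠ ct → zp L ct - zp L c'' > 0) }
    = sSup { δ : ℝ | ∃ x : Fin (k 0) → ℝ, (∀ i, x i ∈ Set.Icc (0 : ℝ) 1) ∧
        ∃ ε ∈ I, conf (netPost k w b x L) c' > δ ∧
          conf (netPost k w b (fP x ε) L) ct > 0 } := by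
  
  congr 1
  ext δ
  constructor
  · rintro ⟨x, ε, zhat, z, a, zhatp, zp, ap, hx, hε, hz0, hzp0, haff, haffp, hbm, hbmp,
      hgap, hgapt⟩
    have hzL : z L = netPost k w b x L :=
      z_eq_netPost L k w b x zhat z hz0 haff
        (fun m hm j => bigM_eq (hbm m hm j).1 (hbm m hm j).2.1 (hbm m hm j).2.2.1
          (hbm m hm j).2.2.2.1 (hbm m hm j).2.2.2.2) L le_rfl
    have hzpL : zp L = netPost k w b (fP x ε) L :=
      z_eq_netPost L k w b (fP x ε) zhatp zp hzp0 haffp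
        (fun m hm j => bigM_eq (hbmp m hm j).1 (hbmp m hm j).2.1 (hbmp m hm j).2.2.1
          (hbmp m hm j).2.2.2.1 (hbmp m hm j).2.2.2.2) L le_rfl
    refine ⟨x, hx, ε, hε, ?_, ?_⟩
    · rw [conf_gt_iff _ _ ct hct]
      intro c'' hc''
      rw [← hzL]
      exact hgap c'' hc''
    · rw [conf_gt_iff _ _ c' (Ne.symm hct)]
      intro c'' hc''
      rw [← hzpL]
      exact hgapt c'' hc''
  · rintro ⟨x, hx, ε, hε, h1, h2⟩
    rw [conf_gt_iff _ _ ct hct] at h1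
    rw [conf_gt_iff _ _ c' (Ne.symm hct)] at h2
    refine ⟨x, ε, fun m j => netPre k w b x m j, fun m => netPost k w b x m,
      fun m j => if 0 ≤ netPre k w b x m j then 1 else 0,
      fun m j => netPre k w b (fP x ε) m j, fun m => netPost k w b (fP x ε) m,
      fun m j => if 0 ≤ netPre k w b (fP x ε) m j then 1 else 0,
      hx, hε, rfl, rfl, fun m _ j => rfl, fun m _ j => rfl, ?_, ?_, h1, h2⟩
    · intro m hm j
      exact bigM_construct (hbounds x hx m hm j).1 (hbounds x hx m hm j).2
    · intro m hm j
      exact bigM_construct (hboundsP x hx ε hε m hm j).1 (hboundsP x hx ε hε m hm j).2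
end
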